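/- Let δ¹ = (10,20,21,23,25,27) and δ² = (10,23,21,20,25,27) in ℝ^6 with coordinates (x_12, x_13, x_14, x_23, x_24, x_34), and let δ³ = (δ¹ + δ²)/2. Then every u ∈ C(δ¹, U_4) and every u ∈ C(δ², U_4) satisfies u_12 < u_13 = u_23 < u_14 = u_24 = u_34 (topology (4(3(12)))), while every u ∈ C(δ³, U_4) satisfies u_12 < u_14 = u_24 < u_13 = u_23 = u_34 (topology (3(4(12)))). In particular, the set of dissimilarity maps all of whose l∞-closest ultrametrics have topology (4(3(12))) is not convex. -/

import Mathlib

/-- Index set for unordered pairs of distinct elements of `{1,…,n}`: ordered pairs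
`(i, j)` with `i < j`. -/
abbrev PairIdx (n : ℕ) := {p : Fin n × Fin n // p.1 < p.2}

/-- A dissimilarity map on `n` elements: a point of `ℝ^(n choose 2)`, viewed as a
real-valued function on unordered pairs of distinct elements.  The product metric on this
type is exactly the `l∞`-metric. -/
abbrev DissimMap (n : ℕ) := PairIdx n → ℝ

/-- The value of a dissimilarity map on the unordered pair `{i, j}` (zero if `i = j`). -/
def dm {n : ℕ} (u : DissimMap n) (i j : Fin n) : ℝ :=
  if h : i < j then u ⟨(i, j), h⟩ else if h' : j < i then u ⟨(j, i), h'⟩ else 0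

/-- The set of ultrametrics on `n` elements. -/
def Ultrametrics (n : ℕ) : Set (DissimMap n) :=
  {u | ∀ i j k : Fin n, i ≠ j → i ≠ k → j ≠ k → dm u i j ≤ max (dm u i k) (dm u j k)}

/-- The set of points of `S` that are `l∞`-closest to `x`. -/
noncomputable def closestPts {n : ℕ} (x : DissimMap n) (S : Set (DissimMap n)) :
    Set (DissimMap n) :=
  {y ∈ S | dist x y = Metric.infDist x S}

/-- Build a dissimilarity map from a matrix of values. -/
def ofMat {n : ℕ} (A : Matrix (Fin n) (Fin n) ℝ) : DissimMap n := fun p => A p.1.1 p.1.2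

/-- An ultrametric on `{1,2,3,4}` has rooted topology `(4(3(12)))`:
`u₁₂ < u₁₃ = u₂₃ < u₁₄ = u₂₄ = u₃₄`. -/
def HasTop4_3_12 (u : DissimMap 4) : Prop :=
  dm u 0 1 < dm u 0 2 ∧ dm u 0 2 = dm u 1 2 ∧ dm u 0 2 < dm u 0 3 ∧
  dm u 0 3 = dm u 1 3 ∧ dm u 1 3 = dm u 2 3

/-- An ultrametric on `{1,2,3,4}` has rooted topology `(3(4(12)))`:
`u₁₂ < u₁₄ = u₂₄ < u₁₃ = u₂₃ = u₃₄`. -/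
def HasTop3_4_12 (u : DissimMap 4) : Prop :=
  dm u 0 1 < dm u 0 3 ∧ dm u 0 3 = dm u 1 3 ∧ dm u 0 3 < dm u 0 2 ∧
  dm u 0 2 = dm u 1 2 ∧ dm u 1 2 = dm u 2 3

namespace DNCproof

def p01 : PairIdx 4 := ⟨(0,1), by decide⟩
def p02 : PairIdx 4 := ⟨(0,2), by decide⟩
def p03 : PairIdx 4 := ⟨(0,3), by decide⟩
def p12 : PairIdx 4 := ⟨(1,2), by decide⟩
def p13 : PairIdx 4 := ⟨(1,3), by decide⟩
def p23 : PairIdx 4 := ⟨(2,3), by decide⟩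

lemma pair_cases : ∀ p : PairIdx 4,
    p = p01 ∨ p = p02 ∨ p = p03 ∨ p = p12 ∨ p = p13 ∨ p = p23 := by decide

lemma ultra_iff (u : DissimMap 4) : u ∈ Ultrametrics 4 ↔
    (u p01 ≤ max (u p02) (u p12) ∧ u p02 ≤ max (u p01) (u p12) ∧ u p12 ≤ max (u p01) (u p02)) ∧
    (u p01 ≤ max (u p03) (u p13) ∧ u p03 ≤ max (u p01) (u p13) ∧ u p13 ≤ max (u p01) (u p03)) ∧
    (u p02 ≤ max (u p03) (u p23) ∧ u p03 ≤ max (u p02) (u p23) ∧ u p23 ≤ max (u p02) (u p03)) ∧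
    (u p12 ≤ max (u p13) (u p23) ∧ u p13 ≤ max (u p12) (u p23) ∧ u p23 ≤ max (u p12) (u p13)) := by
  constructor
  · intro hu
    exact ⟨⟨hu 0 1 2 (by decide) (by decide) (by decide),
            hu 0 2 1 (by decide) (by decide) (by decide),
            hu 1 2 0 (by decide) (by decide) (by decide)⟩,
           ⟨hu 0 1 3 (by decide) (by decide) (by decide),
            hu 0 3 1 (by decide) (by decide) (by decide),
            hu 1 3 0 (by decide) (by decide) (by decide)⟩,
           ⟨hu 0 2 3 (by decide) (by decide) (by decide),
            hu 0 3 2 (by decide) (by decide) (by decide),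
            hu 2 3 0 (by decide) (by decide) (by decide)⟩,
           ⟨hu 1 2 3 (by decide) (by decide) (by decide),
            hu 1 3 2 (by decide) (by decide) (by decide),
            hu 2 3 1 (by decide) (by decide) (by decide)⟩⟩
  · rintro ⟨⟨h1,h2,h3⟩,⟨h4,h5,h6⟩,⟨h7,h8,h9⟩,⟨h10,h11,h12⟩⟩ i j k hij hik hjk
    fin_cases i <;> fin_cases j <;> fin_cases k <;>
      first
        | exact absurd rfl hij | exact absurd rfl hik | exact absurd rfl hjk
        | exact h1 | exact h2 | exact h3 | exact h4 | exact h5 | exact h6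
        | exact h7 | exact h8 | exact h9 | exact h10 | exact h11 | exact h12
        | exact h1.trans (max_comm _ _).le | exact h2.trans (max_comm _ _).le
        | exact h3.trans (max_comm _ _).le | exact h4.trans (max_comm _ _).le
        | exact h5.trans (max_comm _ _).le | exact h6.trans (max_comm _ _).le
        | exact h7.trans (max_comm _ _).le | exact h8.trans (max_comm _ _).le
        | exact h9.trans (max_comm _ _).le | exact h10.trans (max_comm _ _).le
        | exact h11.trans (max_comm _ _).le | exact h12.trans (max_comm _ _).le

noncomputable def d1 : DissimMap 4 := ofMat !![0,10,20,21; 10,0,23,25; 20,23,0,27; 21,25,27,0]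
noncomputable def d2 : DissimMap 4 := ofMat !![0,10,23,21; 10,0,20,25; 23,20,0,27; 21,25,27,0]
noncomputable def d3 : DissimMap 4 := (1/2 : ℝ) • d1 + (1/2 : ℝ) • d2

noncomputable def w1 : DissimMap 4 := ofMat !![0,10,20,24; 0,0,20,24; 0,0,0,24; 0,0,0,0]
noncomputable def w2 : DissimMap 4 := ofMat !![0,10,43/2,24; 0,0,43/2,24; 0,0,0,24; 0,0,0,0]
noncomputable def w3 : DissimMap 4 := ofMat !![0,10,97/4,23; 0,0,97/4,23; 0,0,0,97/4; 0,0,0,0]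

lemma d1v : d1 p01 = 10 ∧ d1 p02 = 20 ∧ d1 p03 = 21 ∧ d1 p12 = 23 ∧ d1 p13 = 25 ∧ d1 p23 = 27 := by
  refine ⟨?_,?_,?_,?_,?_,?_⟩ <;>
    norm_num [d1, ofMat, p01, p02, p03, p12, p13, p23,
      Matrix.cons_val_zero, Matrix.cons_val_one, Matrix.head_cons] <;> rfl

lemma d2v : d2 p01 = 10 ∧ d2 p02 = 23 ∧ d2 p03 = 21 ∧ d2 p12 = 20 ∧ d2 p13 = 25 ∧ d2 p23 = 27 := by
  refine ⟨?_,?_,?_,?_,?_,?_⟩ <;>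
    norm_num [d2, ofMat, p01, p02, p03, p12, p13, p23,
      Matrix.cons_val_zero, Matrix.cons_val_one, Matrix.head_cons] <;> rfl

lemma d3v : d3 p01 = 10 ∧ d3 p02 = 43/2 ∧ d3 p03 = 21 ∧ d3 p12 = 43/2 ∧ d3 p13 = 25 ∧ d3 p23 = 27 := by
  obtain ⟨a1,a2,a3,a4,a5,a6⟩ := d1v; obtain ⟨b1,b2,b3,b4,b5,b6⟩ := d2v
  refine ⟨?_,?_,?_,?_,?_,?_⟩ <;>
    simp [d3, a1,a2,a3,a4,a5,a6,b1,b2,b3,b4,b5,b6] <;> norm_num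

lemma w1v : w1 p01 = 10 ∧ w1 p02 = 20 ∧ w1 p03 = 24 ∧ w1 p12 = 20 ∧ w1 p13 = 24 ∧ w1 p23 = 24 := by
  refine ⟨?_,?_,?_,?_,?_,?_⟩ <;>
    norm_num [w1, ofMat, p01, p02, p03, p12, p13, p23,
      Matrix.cons_val_zero, Matrix.cons_val_one, Matrix.head_cons] <;> rfl

lemma w2v : w2 p01 = 10 ∧ w2 p02 = 43/2 ∧ w2 p03 = 24 ∧ w2 p12 = 43/2 ∧ w2 p13 = 24 ∧ w2 p23 = 24 := by
  refine ⟨?_,?_,?_,?_,?_,?_⟩ <;>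
    norm_num [w2, ofMat, p01, p02, p03, p12, p13, p23,
      Matrix.cons_val_zero, Matrix.cons_val_one, Matrix.head_cons] <;> rfl

lemma w3v : w3 p01 = 10 ∧ w3 p02 = 97/4 ∧ w3 p03 = 23 ∧ w3 p12 = 97/4 ∧ w3 p13 = 23 ∧ w3 p23 = 97/4 := by
  refine ⟨?_,?_,?_,?_,?_,?_⟩ <;>
    norm_num [w3, ofMat, p01, p02, p03, p12, p13, p23,
      Matrix.cons_val_zero, Matrix.cons_val_one, Matrix.head_cons] <;> rfl

lemma w1U : w1 ∈ Ultrametrics 4 := by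
  obtain ⟨e1,e2,e3,e4,e5,e6⟩ := w1v
  rw [ultra_iff, e1, e2, e3, e4, e5, e6]
  norm_num [le_max_iff]

lemma w2U : w2 ∈ Ultrametrics 4 := by
  obtain ⟨e1,e2,e3,e4,e5,e6⟩ := w2v
  rw [ultra_iff, e1, e2, e3, e4, e5, e6]
  norm_num [le_max_iff]

lemma w3U : w3 ∈ Ultrametrics 4 := by
  obtain ⟨e1,e2,e3,e4,e5,e6⟩ := w3v
  rw [ultra_iff, e1, e2, e3, e4, e5, e6]
  norm_num [le_max_iff]

lemma dist1 : dist d1 w1 ≤ 3 := by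
  refine (dist_pi_le_iff (by norm_num)).2 fun p => ?_
  obtain ⟨a1,a2,a3,a4,a5,a6⟩ := d1v; obtain ⟨b1,b2,b3,b4,b5,b6⟩ := w1v
  rcases pair_cases p with rfl|rfl|rfl|rfl|rfl|rfl <;>
    rw [Real.dist_eq] <;>
    simp only [a1,a2,a3,a4,a5,a6,b1,b2,b3,b4,b5,b6] <;>
    rw [abs_le] <;> constructor <;> norm_num

lemma dist2 : dist d2 w2 ≤ 3 := by
  refine (dist_pi_le_iff (by norm_num)).2 fun p => ?_
  obtain ⟨a1,a2,a3,a4,a5,a6⟩ := d2v; obtain ⟨b1,b2,b3,b4,b5,b6⟩ := w2v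
  rcases pair_cases p with rfl|rfl|rfl|rfl|rfl|rfl <;>
    rw [Real.dist_eq] <;>
    simp only [a1,a2,a3,a4,a5,a6,b1,b2,b3,b4,b5,b6] <;>
    rw [abs_le] <;> constructor <;> norm_num

lemma dist3 : dist d3 w3 ≤ 11/4 := by
  refine (dist_pi_le_iff (by norm_num)).2 fun p => ?_
  obtain ⟨a1,a2,a3,a4,a5,a6⟩ := d3v; obtain ⟨b1,b2,b3,b4,b5,b6⟩ := w3v
  rcases pair_cases p with rfl|rfl|rfl|rfl|rfl|rfl <;>
    rw [Real.dist_eq] <;>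
    simp only [a1,a2,a3,a4,a5,a6,b1,b2,b3,b4,b5,b6] <;>
    rw [abs_le] <;> constructor <;> norm_num

lemma coord_bound (x u : DissimMap 4) (p : PairIdx 4) : |x p - u p| ≤ dist x u := by
  rw [← Real.dist_eq]; exact dist_le_pi_dist x u p

lemma low1 (u : DissimMap 4) (hu : u ∈ Ultrametrics 4) : 3 ≤ dist d1 u := by
  obtain ⟨a1,a2,a3,a4,a5,a6⟩ := d1v
  obtain ⟨Hb1, Hb2⟩ := abs_le.1 (a2 ▸ coord_bound d1 u p02)
  obtain ⟨Hc1, Hc2⟩ := abs_le.1 (a3 ▸ coord_bound d1 u p03)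
  obtain ⟨Hf1, Hf2⟩ := abs_le.1 (a6 ▸ coord_bound d1 u p23)
  have h9 := ((ultra_iff u).1 hu).2.2.1.2.2
  rcases le_max_iff.1 h9 with h | h <;> linarith

lemma low2 (u : DissimMap 4) (hu : u ∈ Ultrametrics 4) : 3 ≤ dist d2 u := by
  obtain ⟨a1,a2,a3,a4,a5,a6⟩ := d2v
  obtain ⟨Ha1, Ha2⟩ := abs_le.1 (a1 ▸ coord_bound d2 u p01)
  obtain ⟨Hc1, Hc2⟩ := abs_le.1 (a3 ▸ coord_bound d2 u p03)
  obtain ⟨Hd1, Hd2⟩ := abs_le.1 (a4 ▸ coord_bound d2 u p12)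
  obtain ⟨He1, He2⟩ := abs_le.1 (a5 ▸ coord_bound d2 u p13)
  obtain ⟨Hf1, Hf2⟩ := abs_le.1 (a6 ▸ coord_bound d2 u p23)
  obtain ⟨-, T124, -, T234⟩ := (ultra_iff u).1 hu
  rcases le_max_iff.1 T124.2.2 with h | h
  · linarith
  · rcases le_max_iff.1 T234.2.2 with h' | h' <;> linarith

lemma low3 (u : DissimMap 4) (hu : u ∈ Ultrametrics 4) : 11/4 ≤ dist d3 u := by
  obtain ⟨a1,a2,a3,a4,a5,a6⟩ := d3v
  obtain ⟨Ha1, Ha2⟩ := abs_le.1 (a1 ▸ coord_bound d3 u p01)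
  obtain ⟨Hc1, Hc2⟩ := abs_le.1 (a3 ▸ coord_bound d3 u p03)
  obtain ⟨Hd1, Hd2⟩ := abs_le.1 (a4 ▸ coord_bound d3 u p12)
  obtain ⟨He1, He2⟩ := abs_le.1 (a5 ▸ coord_bound d3 u p13)
  obtain ⟨Hf1, Hf2⟩ := abs_le.1 (a6 ▸ coord_bound d3 u p23)
  obtain ⟨-, T124, -, T234⟩ := (ultra_iff u).1 hu
  rcases le_max_iff.1 T124.2.2 with h | h
  · linarith
  · rcases le_max_iff.1 T234.2.2 with h' | h' <;> linarith

lemma infd1 : Metric.infDist d1 (Ultrametrics 4) = 3 := by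
  refine le_antisymm ((Metric.infDist_le_dist_of_mem w1U).trans dist1) ?_
  by_contra h
  obtain ⟨u, huU, hlt⟩ := (Metric.infDist_lt_iff ⟨w1, w1U⟩).1 (lt_of_not_ge h)
  exact absurd hlt (not_lt.2 (low1 u huU))

lemma infd2 : Metric.infDist d2 (Ultrametrics 4) = 3 := by
  refine le_antisymm ((Metric.infDist_le_dist_of_mem w2U).trans dist2) ?_
  by_contra h
  obtain ⟨u, huU, hlt⟩ := (Metric.infDist_lt_iff ⟨w2, w2U⟩).1 (lt_of_not_ge h)
  exact absurd hlt (not_lt.2 (low2 u huU))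

lemma infd3 : Metric.infDist d3 (Ultrametrics 4) = 11/4 := by
  refine le_antisymm ((Metric.infDist_le_dist_of_mem w3U).trans dist3) ?_
  by_contra h
  obtain ⟨u, huU, hlt⟩ := (Metric.infDist_lt_iff ⟨w3, w3U⟩).1 (lt_of_not_ge h)
  exact absurd hlt (not_lt.2 (low3 u huU))

lemma part1 : ∀ u ∈ closestPts d1 (Ultrametrics 4), HasTop4_3_12 u := by
  rintro u ⟨huU, hud⟩
  rw [infd1] at hud
  obtain ⟨a1,a2,a3,a4,a5,a6⟩ := d1v
  have bd : ∀ p : PairIdx 4, |d1 p - u p| ≤ 3 := fun p => (coord_bound d1 u p).trans hud.le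
  obtain ⟨Ha1, Ha2⟩ := abs_le.1 (a1 ▸ bd p01)
  obtain ⟨Hb1, Hb2⟩ := abs_le.1 (a2 ▸ bd p02)
  obtain ⟨Hc1, Hc2⟩ := abs_le.1 (a3 ▸ bd p03)
  obtain ⟨Hd1, Hd2⟩ := abs_le.1 (a4 ▸ bd p12)
  obtain ⟨He1, He2⟩ := abs_le.1 (a5 ▸ bd p13)
  obtain ⟨Hf1, Hf2⟩ := abs_le.1 (a6 ▸ bd p23)
  obtain ⟨T123, T124, T134, T234⟩ := (ultra_iff u).1 huU
  -- f ≤ max b c  ⇒ f ≤ c, so c = 24, f = 24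
  have hfc : u p23 ≤ u p03 := by
    rcases le_max_iff.1 T134.2.2 with h | h
    · linarith
    · exact h
  have hc24 : u p03 = 24 := by linarith
  have hf24 : u p23 = 24 := by linarith
  -- c ≤ max a e ⇒ c ≤ e
  have hce : u p03 ≤ u p13 := by
    rcases le_max_iff.1 T124.2.1 with h | h
    · linarith
    · exact h
  -- d ≤ max a b ⇒ d ≤ 23
  have hd23 : u p12 ≤ 23 := by
    rcases le_max_iff.1 T123.2.2 with h | h <;> linarith
  -- e ≤ max d f ⇒ e ≤ 24, hence e = 24
  have he24 : u p13 = 24 := by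
    rcases le_max_iff.1 T234.2.1 with h | h <;> linarith
  -- b = d
  have hbd : u p02 = u p12 := by
    have h1 : u p02 ≤ u p12 := by
      rcases le_max_iff.1 T123.2.1 with h | h
      · linarith
      · exact h
    have h2 : u p12 ≤ u p02 := by
      rcases le_max_iff.1 T123.2.2 with h | h
      · linarith
      · exact h
    linarith
  refine ⟨?_, ?_, ?_, ?_, ?_⟩
  · show u p01 < u p02; linarith
  · show u p02 = u p12; linarith
  · show u p02 < u p03; linarith
  · show u p03 = u p13; linarith
  · show u p13 = u p23; linarith

lemma part2 : ∀ u ∈ closestPts d2 (Ultrametrics 4), HasTop4_3_12 u := by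
  rintro u ⟨huU, hud⟩
  rw [infd2] at hud
  obtain ⟨a1,a2,a3,a4,a5,a6⟩ := d2v
  have bd : ∀ p : PairIdx 4, |d2 p - u p| ≤ 3 := fun p => (coord_bound d2 u p).trans hud.le
  obtain ⟨Ha1, Ha2⟩ := abs_le.1 (a1 ▸ bd p01)
  obtain ⟨Hb1, Hb2⟩ := abs_le.1 (a2 ▸ bd p02)
  obtain ⟨Hc1, Hc2⟩ := abs_le.1 (a3 ▸ bd p03)
  obtain ⟨Hd1, Hd2⟩ := abs_le.1 (a4 ▸ bd p12)
  obtain ⟨He1, He2⟩ := abs_le.1 (a5 ▸ bd p13)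
  obtain ⟨Hf1, Hf2⟩ := abs_le.1 (a6 ▸ bd p23)
  obtain ⟨T123, T124, T134, T234⟩ := (ultra_iff u).1 huU
  -- c = e  (bounds: c ∈ [18,24], e ∈ [22,28], a ≤ 13)
  have hce : u p03 = u p13 := by
    have h1 : u p03 ≤ u p13 := by
      rcases le_max_iff.1 T124.2.1 with h | h
      · linarith
      · exact h
    have h2 : u p13 ≤ u p03 := by
      rcases le_max_iff.1 T124.2.2 with h | h
      · linarith
      · exact h
    linarith
  -- f ≤ max d e ⇒ f ≤ e (d ≤ 23 < 24 ≤ f); f ≥ 24, e = c ≤ 24 ⇒ e = f = c = 24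
  have hfe : u p23 ≤ u p13 := by
    rcases le_max_iff.1 T234.2.2 with h | h
    · linarith
    · exact h
  have he24 : u p13 = 24 := by linarith
  have hf24 : u p23 = 24 := by linarith
  have hc24 : u p03 = 24 := by linarith
  -- b = d
  have hbd : u p02 = u p12 := by
    have h1 : u p02 ≤ u p12 := by
      rcases le_max_iff.1 T123.2.1 with h | h
      · linarith
      · exact h
    have h2 : u p12 ≤ u p02 := by
      rcases le_max_iff.1 T123.2.2 with h | h
      · linarith
      · exact h
    linarith
  refine ⟨?_, ?_, ?_, ?_, ?_⟩
  · show u p01 < u p02; linarith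
  · show u p02 = u p12; linarith
  · show u p02 < u p03; linarith
  · show u p03 = u p13; linarith
  · show u p13 = u p23; linarith

lemma part3 : ∀ u ∈ closestPts d3 (Ultrametrics 4), HasTop3_4_12 u := by
  rintro u ⟨huU, hud⟩
  rw [infd3] at hud
  obtain ⟨a1,a2,a3,a4,a5,a6⟩ := d3v
  have bd : ∀ p : PairIdx 4, |d3 p - u p| ≤ 11/4 := fun p => (coord_bound d3 u p).trans hud.le
  obtain ⟨Ha1, Ha2⟩ := abs_le.1 (a1 ▸ bd p01)
  obtain ⟨Hb1, Hb2⟩ := abs_le.1 (a2 ▸ bd p02)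
  obtain ⟨Hc1, Hc2⟩ := abs_le.1 (a3 ▸ bd p03)
  obtain ⟨Hd1, Hd2⟩ := abs_le.1 (a4 ▸ bd p12)
  obtain ⟨He1, He2⟩ := abs_le.1 (a5 ▸ bd p13)
  obtain ⟨Hf1, Hf2⟩ := abs_le.1 (a6 ▸ bd p23)
  obtain ⟨T123, T124, T134, T234⟩ := (ultra_iff u).1 huU
  -- c = e (bounds: c ∈ [18.25, 23.75], e ∈ [22.25, 27.75], a ≤ 12.75)
  have hce : u p03 = u p13 := by
    have h1 : u p03 ≤ u p13 := by
      rcases le_max_iff.1 T124.2.1 with h | h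
      · linarith
      · exact h
    have h2 : u p13 ≤ u p03 := by
      rcases le_max_iff.1 T124.2.2 with h | h
      · linarith
      · exact h
    linarith
  -- f ≤ max d e: e = c ≤ 23.75 < 24.25 ≤ f ⇒ f ≤ d ≤ 24.25 ⇒ f = d = 24.25
  have hfd : u p23 ≤ u p12 := by
    rcases le_max_iff.1 T234.2.2 with h | h
    · exact h
    · linarith
  have hd : u p12 = 97/4 := by linarith
  have hf : u p23 = 97/4 := by linarith
  -- f ≤ max b c ⇒ f ≤ b ⇒ b = 24.25
  have hfb : u p23 ≤ u p02 := by
    rcases le_max_iff.1 T134.2.2 with h | h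
    · exact h
    · linarith
  have hb : u p02 = 97/4 := by linarith
  refine ⟨?_, ?_, ?_, ?_, ?_⟩
  · show u p01 < u p03; linarith
  · show u p03 = u p13; linarith
  · show u p03 < u p02; linarith
  · show u p02 = u p12; linarith
  · show u p12 = u p23; linarith

lemma w3_in_closest : w3 ∈ closestPts d3 (Ultrametrics 4) := by
  refine ⟨w3U, ?_⟩
  rw [infd3]
  have := Metric.infDist_le_dist_of_mem (x := d3) w3U
  rw [infd3] at this
  linarith [dist3]

lemma not_convex :
    ¬ Convex ℝ {δ : DissimMap 4 | ∀ u ∈ closestPts δ (Ultrametrics 4), HasTop4_3_12 u} := by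
  intro hconv
  have hmid := hconv part1 part2 (by norm_num : (0:ℝ) ≤ 1/2) (by norm_num : (0:ℝ) ≤ 1/2)
      (by norm_num : (1/2:ℝ) + 1/2 = 1)
  have H := hmid w3 w3_in_closest
  obtain ⟨e1,e2,e3,e4,e5,e6⟩ := w3v
  have h3 : dm w3 0 2 < dm w3 0 3 := H.2.2.1
  have : (97/4 : ℝ) < 23 := by
    have hx : dm w3 0 2 = w3 p02 := rfl
    have hy : dm w3 0 3 = w3 p03 := rfl
    rw [hx, hy, e2, e3] at h3; exact h3
  linarith

end DNCproof


/-- for `δ¹ = (10,20,21,23,25,27)`, `δ² = (10,23,21,20,25,27)` and their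
midpoint `δ³`, every `l∞`-closest ultrametric to `δ¹` and to `δ²` has topology
`(4(3(12)))`, while every `l∞`-closest ultrametric to `δ³` has topology `(3(4(12)))`;
in particular the set of dissimilarity maps all of whose closest ultrametrics have
topology `(4(3(12)))` is not convex. -/
theorem district_not_convex :
    (∀ u ∈ closestPts (ofMat !![0,10,20,21; 10,0,23,25; 20,23,0,27; 21,25,27,0])
      (Ultrametrics 4), HasTop4_3_12 u) ∧
    (∀ u ∈ closestPts (ofMat !![0,10,23,21; 10,0,20,25; 23,20,0,27; 21,25,27,0])
      (Ultrametrics 4), HasTop4_3_12 u) ∧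
    (∀ u ∈ closestPts
      ((1/2 : ℝ) • ofMat !![0,10,20,21; 10,0,23,25; 20,23,0,27; 21,25,27,0] +
       (1/2 : ℝ) • ofMat !![0,10,23,21; 10,0,20,25; 23,20,0,27; 21,25,27,0])
      (Ultrametrics 4), HasTop3_4_12 u) ∧
    ¬ Convex ℝ {δ : DissimMap 4 | ∀ u ∈ closestPts δ (Ultrametrics 4), HasTop4_3_12 u} := by
  exact ⟨DNCproof.part1, DNCproof.part2, DNCproof.part3, DNCproof.not_convex⟩
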